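/- Let A: X ⇉ X* be maximal monotone and at most single-valued, with dom A a linear subspace on which A is linear and symmetric. Define f: X → (−∞,+∞] by f(x) = sup_{y ∈ dom A} ( ⟨x,Ay⟩ − ½⟨y,Ay⟩ ). Then dom A = dom f if and only if every sequence (xₙ) in dom A such that (xₙ) converges in X and (⟨xₙ,Axₙ⟩) converges in ℝ satisfies lim xₙ ∈ dom A. -/

import Mathlib

noncomputable section
open scoped Classical
open Filter Topology

/-- A set-valued operator `A : X ⇉ X*` is monotone. -/
def MonotoneOp {X : Type*} [NormedAddCommGroup X] [NormedSpace ℝ X]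
    (A : X → Set (X →L[ℝ] ℝ)) : Prop :=
  ∀ ⦃x y : X⦄ ⦃x' y' : X →L[ℝ] ℝ⦄, x' ∈ A x → y' ∈ A y → 0 ≤ (x' - y') (x - y)

/-- A set-valued operator is maximal monotone if it is monotone and admits no proper
monotone extension (in the sense of graph inclusion). -/
def MaximalMonotoneOp {X : Type*} [NormedAddCommGroup X] [NormedSpace ℝ X]
    (A : X → Set (X →L[ℝ] ℝ)) : Prop :=
  MonotoneOp A ∧ ∀ B : X → Set (X →L[ℝ] ℝ), MonotoneOp B → (∀ x, A x ⊆ B x) → B = A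

/-- The Phelps–Simons function `f(x) = sup_{y ∈ dom A} (⟨x,Ay⟩ - ½⟨y,Ay⟩)` associated
with an at most single-valued `A : X ⇉ X*`. -/
def phelpsF {X : Type*} [NormedAddCommGroup X] [NormedSpace ℝ X]
    (A : X → Set (X →L[ℝ] ℝ)) : X → EReal :=
  fun x => ⨆ q : X × (X →L[ℝ] ℝ), ⨆ _ : q.2 ∈ A q.1,
    ((q.2 x - 1 / 2 * q.2 q.1 : ℝ) : EReal)

/-- The quadratic function `q_A(x) = ½⟨x,Ax⟩` for `x ∈ dom A`, `+∞` otherwise,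
associated with an at most single-valued `A : X ⇉ X*`. -/
def qOp {X : Type*} [NormedAddCommGroup X] [NormedSpace ℝ X]
    (A : X → Set (X →L[ℝ] ℝ)) : X → EReal :=
  fun x => if h : (A x).Nonempty then ((1 / 2 * h.choose x : ℝ) : EReal) else ⊤

/-- The Fenchel conjugate of an extended-real-valued `g : X → (-∞,+∞]`:
`g*(x*) = sup_x (⟨x,x*⟩ - g(x))`. -/
def econj {X : Type*} [NormedAddCommGroup X] [NormedSpace ℝ X]
    (g : X → EReal) : (X →L[ℝ] ℝ) → EReal :=
  fun x' => ⨆ x : X, ((x' x : ℝ) : EReal) - g x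

/-- The biconjugate of `g : X → (-∞,+∞]` (computed on `X`, using reflexivity):
`g**(x) = sup_{x*} (⟨x,x*⟩ - g*(x*))`. -/
def ebiconj {X : Type*} [NormedAddCommGroup X] [NormedSpace ℝ X]
    (g : X → EReal) : X → EReal :=
  fun x => ⨆ x' : X →L[ℝ] ℝ, ((x' x : ℝ) : EReal) - econj g x'


namespace Stmt17Aux

variable {X : Type*} [NormedAddCommGroup X] [NormedSpace ℝ X]

def t (A : X → Set (X →L[ℝ] ℝ)) (x : X) : X →L[ℝ] ℝ :=
  if h : (A x).Nonempty then h.choose else 0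

lemma t_mem {A : X → Set (X →L[ℝ] ℝ)} {x : X} (h : (A x).Nonempty) : t A x ∈ A x := by
  simp only [t, dif_pos h]; exact h.choose_spec

lemma t_eq {A : X → Set (X →L[ℝ] ℝ)} (hsingle : ∀ x, (A x).Subsingleton) {x : X}
    {y' : X →L[ℝ] ℝ} (h : y' ∈ A x) : y' = t A x :=
  hsingle x h (t_mem ⟨_, h⟩)

lemma choose_eq_t {A : X → Set (X →L[ℝ] ℝ)} (hsingle : ∀ x, (A x).Subsingleton) {x : X}
    (h : (A x).Nonempty) : h.choose = t A x :=
  t_eq hsingle h.choose_spec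

lemma ereal_eq_top (a : EReal) (h : ∀ M : ℝ, (M : EReal) ≤ a) : a = ⊤ := by
  induction a with
  | bot => exact absurd (h 0) (by simp)
  | coe x =>
      have := h (x + 1)
      rw [EReal.coe_le_coe_iff] at this
      linarith
  | top => rfl

lemma phelps_le {A : X → Set (X →L[ℝ] ℝ)} {x : X} {M : ℝ}
    (hub : ∀ (y : X) (y' : X →L[ℝ] ℝ), y' ∈ A y → y' x - 1 / 2 * y' y ≤ M) :
    _root_.phelpsF A x ≤ (M : EReal) := by
  refine iSup_le fun q => iSup_le fun hq => ?_
  exact_mod_cast hub q.1 q.2 hq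

lemma le_phelps {A : X → Set (X →L[ℝ] ℝ)} {x y : X} {y' : X →L[ℝ] ℝ} (hy' : y' ∈ A y) :
    ((y' x - 1 / 2 * y' y : ℝ) : EReal) ≤ _root_.phelpsF A x := by
  refine le_iSup_of_le (⟨y, y'⟩ : X × (X →L[ℝ] ℝ)) ?_
  exact le_iSup_of_le hy' le_rfl


/-- Maximality criterion: a monotonically related pair belongs to the graph. -/
lemma related_mem {A : X → Set (X →L[ℝ] ℝ)} (hmax : MaximalMonotoneOp A)
    {w : X} {w' : X →L[ℝ] ℝ}
    (h : ∀ (y : X) (y' : X →L[ℝ] ℝ), y' ∈ A y → 0 ≤ (w' - y') (w - y)) :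
    w' ∈ A w := by
  classical
  set B : X → Set (X →L[ℝ] ℝ) := fun v => A v ∪ {u' | v = w ∧ u' = w'} with hB
  have hmono : MonotoneOp B := by
    intro x y x' y' hx' hy'
    rcases hx' with hx' | ⟨e1, e2⟩
    · rcases hy' with hy' | ⟨e3, e4⟩
      · exact hmax.1 hx' hy'
      · have hh := h x x' hx'
        rw [e3, e4]
        have e : (x' - w') (x - w) = (w' - x') (w - x) := by
          simp [ContinuousLinearMap.sub_apply, map_sub]; ring
        rw [e]; exact hh
    · rcases hy' with hy' | ⟨e3, e4⟩
      · rw [e1, e2]; exact h y y' hy'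
      · rw [e1, e2, e3, e4]; simp
  have hsub : ∀ x, A x ⊆ B x := fun x => Set.subset_union_left
  have hBA : B = A := hmax.2 B hmono hsub
  have : w' ∈ B w := Or.inr ⟨rfl, rfl⟩
  rwa [hBA] at this


section Core

variable {X : Type*} [NormedAddCommGroup X] [NormedSpace ℝ X]

/-- The elementary arithmetic core of the backward direction. -/
lemma core (Vs : Submodule ℝ X) (φ : X → ℝ) (b2 : X → X → ℝ) (xb : X → ℝ)
    (s σ c : ℝ)
    (hb2sym : ∀ y ∈ Vs, ∀ z ∈ Vs, b2 y z = b2 z y)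
    (hφ0 : φ 0 = 0) (hxb0 : xb 0 = 0) (hb200 : b2 0 0 = 0)
    (hφadd : ∀ y ∈ Vs, ∀ v ∈ Vs, φ (y + v) = φ y + φ v)
    (hφsmul : ∀ (a : ℝ), ∀ y ∈ Vs, φ (a • y) = a * φ y)
    (hxbadd : ∀ y ∈ Vs, ∀ v ∈ Vs, xb (y + v) = xb y + xb v)
    (hxbsmul : ∀ (a : ℝ), ∀ y ∈ Vs, xb (a • y) = a * xb y)
    (hb2addl : ∀ y ∈ Vs, ∀ v ∈ Vs, ∀ z ∈ Vs, b2 (y + v) z = b2 y z + b2 v z)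
    (hb2smull : ∀ (a : ℝ), ∀ y ∈ Vs, ∀ z ∈ Vs, b2 (a • y) z = a * b2 y z)
    (hA1 : ∀ y ∈ Vs, φ y - b2 y y / 2 ≤ s)
    (hA2 : ∀ y ∈ Vs, xb y - b2 y y / 2 ≤ σ)
    (hσap : ∀ ε : ℝ, 0 < ε → ∃ w ∈ Vs, σ - ε < xb w - b2 w w / 2)
    (hc : s + σ < c)
    (hstar : ∀ z ∈ Vs, ∀ r : ℝ, ∃ y ∈ Vs,
      r * c + φ z < φ y + r * xb y + b2 y z - b2 y y) :
    False := by
  classical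
  -- some helper expansions
  have hb2addr : ∀ y ∈ Vs, ∀ v ∈ Vs, ∀ z ∈ Vs, b2 z (y + v) = b2 z y + b2 z v := by
    intro y hy v hv z hz
    rw [hb2sym z hz (y+v) (Vs.add_mem hy hv), hb2addl y hy v hv z hz,
      hb2sym y hy z hz, hb2sym v hv z hz]
  have hb2smulr : ∀ (a : ℝ), ∀ y ∈ Vs, ∀ z ∈ Vs, b2 z (a • y) = a * b2 z y := by
    intro a y hy z hz
    rw [hb2sym z hz _ (Vs.smul_mem a hy), hb2smull a y hy z hz, hb2sym y hy z hz]
  have hBsmul : ∀ (a : ℝ), ∀ y ∈ Vs, b2 (a • y) (a • y) = a * (a * b2 y y) := by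
    intro a y hy
    rw [hb2smull a y hy _ (Vs.smul_mem a hy), hb2smulr a y hy y hy]
  -- the quadratic sup family
  set QS : ℝ → Set ℝ := fun ρ => {v | ∃ y ∈ Vs, v = φ y - ρ * xb y - b2 y y / 2} with hQS
  have hzero_mem : ∀ ρ, (0:ℝ) ∈ QS ρ := by
    intro ρ; exact ⟨0, Vs.zero_mem, by simp [hφ0, hxb0, hb200]⟩
  have hne : ∀ ρ, (QS ρ).Nonempty := fun ρ => ⟨0, hzero_mem ρ⟩
  -- pointwise bound part 1 : φ y - b2 y y / 4 ≤ 2 s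
  have hP1 : ∀ y ∈ Vs, φ y - b2 y y / 4 ≤ 2 * s := by
    intro y hy
    have hu : (2:ℝ)⁻¹ • y ∈ Vs := Vs.smul_mem _ hy
    have h1 := hA1 _ hu
    rw [hφsmul _ y hy, hBsmul _ y hy] at h1
    linarith
  -- pointwise bound part 2 : for ρ ≠ 0, -ρ * xb y - b2 y y / 4 ≤ 2 ρ^2 σ
  have hP2 : ∀ ρ : ℝ, ρ ≠ 0 → ∀ y ∈ Vs, -(ρ * xb y) - b2 y y / 4 ≤ 2 * ρ^2 * σ := by
    intro ρ hρ y hy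
    have hu : (-(2*ρ))⁻¹ • y ∈ Vs := Vs.smul_mem _ hy
    have h1 := hA2 _ hu
    rw [hxbsmul _ y hy, hBsmul _ y hy] at h1
    have h2ρ : (2*ρ) ≠ 0 := by positivity
    have hρ2 : (0:ℝ) < ρ^2 := by positivity
    have h2 : 2*ρ^2 * ((-(2*ρ))⁻¹ * xb y - (-(2*ρ))⁻¹ * ((-(2*ρ))⁻¹ * b2 y y) / 2)
        ≤ 2*ρ^2 * σ := by
      apply mul_le_mul_of_nonneg_left h1 (by positivity)
    calc -(ρ * xb y) - b2 y y / 4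
        = 2*ρ^2 * ((-(2*ρ))⁻¹ * xb y - (-(2*ρ))⁻¹ * ((-(2*ρ))⁻¹ * b2 y y) / 2) := by
          field_simp [hρ]
          ring
      _ ≤ 2 * ρ^2 * σ := h2
  -- P3 : for ρ ≠ 0, -(ρ * xb y) - b2 y y / 2 ≤ ρ^2 σ
  have hP3 : ∀ ρ : ℝ, ρ ≠ 0 → ∀ y ∈ Vs, -(ρ * xb y) - b2 y y / 2 ≤ ρ^2 * σ := by
    intro ρ hρ y hy
    have hu : (-ρ)⁻¹ • y ∈ Vs := Vs.smul_mem _ hy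
    have h1 := hA2 _ hu
    rw [hxbsmul _ y hy, hBsmul _ y hy] at h1
    have hρ2 : (0:ℝ) < ρ^2 := by positivity
    have h2 : ρ^2 * ((-ρ)⁻¹ * xb y - (-ρ)⁻¹ * ((-ρ)⁻¹ * b2 y y) / 2) ≤ ρ^2 * σ :=
      mul_le_mul_of_nonneg_left h1 (le_of_lt hρ2)
    calc -(ρ * xb y) - b2 y y / 2
        = ρ^2 * ((-ρ)⁻¹ * xb y - (-ρ)⁻¹ * ((-ρ)⁻¹ * b2 y y) / 2) := by
          field_simp [hρ]
      _ ≤ ρ^2 * σ := h2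
  have hbdd : ∀ ρ : ℝ, ρ ≠ 0 → BddAbove (QS ρ) := by
    intro ρ hρ
    refine ⟨2*s + 2*ρ^2*σ, ?_⟩
    rintro v ⟨y, hy, rfl⟩
    have := hP1 y hy
    have := hP2 ρ hρ y hy
    linarith
  set Q : ℝ → ℝ := fun ρ => sSup (QS ρ) with hQ
  have hQ0 : ∀ ρ : ℝ, ρ ≠ 0 → 0 ≤ Q ρ := fun ρ hρ => le_csSup (hbdd ρ hρ) (hzero_mem ρ)
  have hQub : ∀ ρ : ℝ, ∀ y ∈ Vs, ρ ≠ 0 → φ y - ρ * xb y - b2 y y / 2 ≤ Q ρ :=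
    fun ρ y hy hρ => le_csSup (hbdd ρ hρ) ⟨y, hy, rfl⟩
  -- recursion inequality
  have hrec : ∀ ρ : ℝ, ρ ≠ 0 → 2 * Q ρ + 2 * ρ^2 * σ ≤ Q (2*ρ) + s := by
    intro ρ hρ
    have h2ρ : (2*ρ) ≠ 0 := by positivity
    have key : ∀ v ∈ Vs, 2 * (-(ρ * xb v) - b2 v v / 2) ≤ Q (2*ρ) + s - 2 * Q ρ := by
      intro v hv
      have hyb : ∀ y ∈ Vs, φ y - ρ * xb y - b2 y y / 2
          ≤ (Q (2*ρ) + s - 2 * (-(ρ * xb v) - b2 v v / 2)) / 2 := by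
        intro y hy
        have h1 : φ (y+v) - (2*ρ) * xb (y+v) - b2 (y+v) (y+v) / 2 ≤ Q (2*ρ) :=
          hQub (2*ρ) (y+v) (Vs.add_mem hy hv) h2ρ
        have h2 : φ (y-v) - b2 (y-v) (y-v) / 2 ≤ s := hA1 _ (Vs.sub_mem hy hv)
        have e1 : φ (y+v) = φ y + φ v := hφadd y hy v hv
        have e2 : xb (y+v) = xb y + xb v := hxbadd y hy v hv
        have e3 : b2 (y+v) (y+v) = b2 y y + 2 * b2 y v + b2 v v := by
          rw [hb2addl y hy v hv _ (Vs.add_mem hy hv), hb2addr y hy v hv y hy,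
            hb2addr y hy v hv v hv, hb2sym v hv y hy]
          ring
        have hmv : -v ∈ Vs := Vs.neg_mem hv
        have e4 : φ (y-v) = φ y - φ v := by
          rw [sub_eq_add_neg, hφadd y hy _ hmv]
          have : φ (-v) = - φ v := by
            have := hφsmul (-1) v hv; simpa using this
          linarith [this]
        have e5 : b2 (y-v) (y-v) = b2 y y - 2 * b2 y v + b2 v v := by
          have hyv : y - v ∈ Vs := Vs.sub_mem hy hv
          have en1 : b2 (-v) (-v) = b2 v v := by
            have := hBsmul (-1) v hv; simpa using this
          have en2 : b2 y (-v) = - b2 y v := by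
            have := hb2smulr (-1) v hv y hy; simpa using this
          have en3 : b2 (-v) y = - b2 v y := by
            have := hb2smull (-1) v hv y hy; simpa using this
          rw [sub_eq_add_neg, hb2addl y hy _ hmv _ (Vs.add_mem hy hmv),
            hb2addr y hy _ hmv y hy, hb2addr y hy _ hmv _ hmv, en1, en2, en3,
            hb2sym v hv y hy]
          ring
        rw [e1, e2, e3] at h1
        rw [e4, e5] at h2
        linarith
      have : Q ρ ≤ (Q (2*ρ) + s - 2 * (-(ρ * xb v) - b2 v v / 2)) / 2 := by
        apply csSup_le (hne ρ)
        rintro v' ⟨y, hy, rfl⟩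
        exact hyb y hy
      linarith
    -- approximate attainment of ρ² σ
    have : ∀ ε : ℝ, 0 < ε → 2*ρ^2*σ - ε ≤ Q (2*ρ) + s - 2 * Q ρ := by
      intro ε hε
      have hρ2 : (0:ℝ) < ρ^2 := by positivity
      obtain ⟨w, hw, hwval⟩ := hσap (ε / (2*ρ^2)) (by positivity)
      have hv : (-ρ) • w ∈ Vs := Vs.smul_mem _ hw
      have h1 := key _ hv
      rw [hxbsmul _ w hw, hBsmul _ w hw] at h1
      have h2 : ρ^2 * (σ - ε/(2*ρ^2)) ≤ ρ^2 * (xb w - b2 w w / 2) :=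
        mul_le_mul_of_nonneg_left (le_of_lt hwval) (le_of_lt hρ2)
      have e : 2 * (-(ρ * (-ρ * xb w)) - -ρ * (-ρ * b2 w w) / 2)
          = 2 * (ρ^2 * (xb w - b2 w w / 2)) := by ring
      rw [e] at h1
      have e2 : ρ^2 * (σ - ε/(2*ρ^2)) = ρ^2 * σ - ε/2 := by field_simp
      rw [e2] at h2
      linarith
    by_contra hcon
    push_neg at hcon
    obtain ⟨ε, hε, hlt⟩ : ∃ ε : ℝ, 0 < ε ∧ Q (2*ρ) + s - 2*Q ρ < 2*ρ^2*σ - ε := by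
      refine ⟨(2*Q ρ + 2*ρ^2*σ - (Q (2*ρ) + s))/2, by linarith, by linarith⟩
    exact absurd (this ε hε) (by linarith)
  -- induction : Q (2^k) ≥ 2^k Q 1 + 2^k (2^k - 1) σ - (2^k - 1) s
  have hind : ∀ k : ℕ, (2:ℝ)^k * Q 1 + (2:ℝ)^k * ((2:ℝ)^k - 1) * σ - ((2:ℝ)^k - 1) * s
      ≤ Q ((2:ℝ)^k) := by
    intro k
    induction k with
    | zero => simp
    | succ k ih =>
        have hk : ((2:ℝ)^k) ≠ 0 := by positivity
        have h1 := hrec ((2:ℝ)^k) hk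
        have epow : (2:ℝ)^(k+1) = 2 * (2:ℝ)^k := by ring
        rw [epow]
        nlinarith [h1, ih]
  -- choose r = 2^k large
  have hδ : 0 < c - s - σ := by linarith
  have hs0 : 0 ≤ s := by
    have := hA1 0 Vs.zero_mem; simp [hφ0, hb200] at this; linarith
  obtain ⟨k, hk⟩ := pow_unbounded_of_one_lt ((3*s + 2)/(c - s - σ)) (by norm_num : (1:ℝ) < 2)
  set r : ℝ := (2:ℝ)^k with hr
  have hr0 : (0:ℝ) < r := by positivity
  have hrne : r ≠ 0 := ne_of_gt hr0
  have hrbig : 3*s + 2 < r * (c - s - σ) := by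
    rw [div_lt_iff₀ hδ] at hk
    calc 3*s + 2 < (2:ℝ)^k * (c - s - σ) := by linarith [hk]
      _ = r * (c - s - σ) := by rw [hr]
  -- choose z near-maximizing Q r
  obtain ⟨vz, hvzmem, hvz⟩ : ∃ v ∈ QS r, Q r - 1 < v := by
    obtain ⟨v, hv1, hv2⟩ := exists_lt_of_lt_csSup (hne r) (by linarith : Q r - 1 < Q r)
    exact ⟨v, hv1, hv2⟩
  obtain ⟨z, hz, rfl⟩ := hvzmem
  -- (E) : ∀ y ∈ Vs, φ y - r * xb y - b2 y z - b2 y y / 2 < 1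
  have hE : ∀ y ∈ Vs, φ y - r * xb y - b2 y z - b2 y y / 2 < 1 := by
    intro y hy
    have h1 : φ (y+z) - r * xb (y+z) - b2 (y+z) (y+z) / 2 ≤ Q r :=
      hQub r (y+z) (Vs.add_mem hy hz) hrne
    have e1 : φ (y+z) = φ y + φ z := hφadd y hy z hz
    have e2 : xb (y+z) = xb y + xb z := hxbadd y hy z hz
    have e3 : b2 (y+z) (y+z) = b2 y y + 2 * b2 y z + b2 z z := by
      rw [hb2addl y hy z hz _ (Vs.add_mem hy hz), hb2addr y hy z hz y hy,
        hb2addr y hy z hz z hz, hb2sym z hz y hy]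
      ring
    rw [e1, e2, e3] at h1
    linarith
  -- the star consequence
  obtain ⟨y₀, hy₀, hstar0⟩ := hstar z hz r
  -- (E) at -y₀
  have hEneg : -φ y₀ + r * xb y₀ + b2 y₀ z - b2 y₀ y₀ / 2 < 1 := by
    have h1 := hE (-y₀) (Vs.neg_mem hy₀)
    have e1 : φ (-y₀) = - φ y₀ := by
      have := hφsmul (-1) y₀ hy₀; simpa using this
    have e2 : xb (-y₀) = - xb y₀ := by
      have := hxbsmul (-1) y₀ hy₀; simpa using this
    have e3 : b2 (-y₀) z = - b2 y₀ z := by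
      have := hb2smull (-1) y₀ hy₀ z hz; simpa using this
    have e4 : b2 (-y₀) (-y₀) = b2 y₀ y₀ := by
      have := hBsmul (-1) y₀ hy₀; simpa using this
    rw [e1, e2, e3, e4] at h1
    linarith
  -- P4 : 2 φ y₀ - b2 y₀ y₀ / 2 ≤ 4 s
  have hP4 : 2 * φ y₀ - b2 y₀ y₀ / 2 ≤ 4 * s := by
    have hu : (2:ℝ)⁻¹ • y₀ ∈ Vs := Vs.smul_mem _ hy₀
    have h1 := hA1 _ hu
    rw [hφsmul _ y₀ hy₀, hBsmul _ y₀ hy₀] at h1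
    linarith
  -- lower bound for φ z
  have hφz : Q r - 1 - r^2 * σ < φ z := by
    have h1 := hP3 r hrne z hz
    linarith
  -- combine
  have hQr := hind k
  rw [← hr] at hQr
  have hQ1 : 0 ≤ Q 1 := hQ0 1 one_ne_zero
  nlinarith [hstar0, hEneg, hP4, hφz, hQr, hrbig, mul_nonneg (le_of_lt hr0) hQ1]

end Core

end Stmt17Aux

set_option maxHeartbeats 1000000 in
/-- Proposition 6.3. Let `A : X ⇉ X*` be maximal monotone, at most
single-valued, with `dom A` a linear subspace on which `A` is linear and symmetric, and
let `f` be the Phelps–Simons function of `A`. Then `dom A = dom f` if and only if every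
sequence `(xₙ)` in `dom A` that converges in `X` and for which `(⟨xₙ,Axₙ⟩)` converges in
`ℝ` has its limit in `dom A`. -/
theorem stmt17 {X : Type*} [NormedAddCommGroup X] [NormedSpace ℝ X] [CompleteSpace X]
    (hrefl : Function.Surjective (NormedSpace.inclusionInDoubleDual ℝ X))
    (A : X → Set (X →L[ℝ] ℝ))
    (hmax : MaximalMonotoneOp A)
    (hsingle : ∀ x, (A x).Subsingleton)
    (hdom : ∃ V : Submodule ℝ X, (V : Set X) = {x | (A x).Nonempty})
    (hadd : ∀ (x y : X) (x' y' : X →L[ℝ] ℝ), x' ∈ A x → y' ∈ A y → x' + y' ∈ A (x + y))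
    (hsmul : ∀ (c : ℝ) (x : X) (x' : X →L[ℝ] ℝ), x' ∈ A x → c • x' ∈ A (c • x))
    (hsym : ∀ (x y : X) (x' y' : X →L[ℝ] ℝ), x' ∈ A x → y' ∈ A y → x' y = y' x) :
    {x : X | (A x).Nonempty} = {x : X | phelpsF A x ≠ ⊤}
      ↔ ∀ (x : ℕ → X) (l : X) (hx : ∀ n, (A (x n)).Nonempty),
          Tendsto x atTop (𝓝 l) →
          (∃ r : ℝ, Tendsto (fun n => ((hx n).choose) (x n)) atTop (𝓝 r)) →
          (A l).Nonempty := by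
  classical
  obtain ⟨Vs, hVs⟩ := hdom
  set T : X → (X →L[ℝ] ℝ) := Stmt17Aux.t A with hTdef
  have hmemV : ∀ x : X, x ∈ Vs ↔ (A x).Nonempty := fun x => by
    constructor
    · intro h
      have h2 : x ∈ (Vs : Set X) := h
      rw [hVs] at h2; exact h2
    · intro h
      have h2 : x ∈ ({x | (A x).Nonempty} : Set X) := h
      rw [← hVs] at h2; exact h2
  have hTmem : ∀ {x : X}, (A x).Nonempty → T x ∈ A x := fun h => Stmt17Aux.t_mem h
  have hTeq : ∀ {x : X} {y' : X →L[ℝ] ℝ}, y' ∈ A x → y' = T x := fun h =>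
    Stmt17Aux.t_eq hsingle h
  have h0V : (0 : X) ∈ Vs := Vs.zero_mem
  have h0A : (0 : X →L[ℝ] ℝ) ∈ A 0 := by
    obtain ⟨w, hw⟩ := (hmemV 0).1 h0V
    have := hsmul 0 0 w hw
    simpa using this
  have hT0 : T 0 = 0 := (hTeq h0A).symm
  have hTadd : ∀ {x y : X}, (A x).Nonempty → (A y).Nonempty → T (x + y) = T x + T y := by
    intro x y hx hy
    exact (hTeq (hadd _ _ _ _ (hTmem hx) (hTmem hy))).symm
  have hTsmul : ∀ (c : ℝ) {x : X}, (A x).Nonempty → T (c • x) = c • T x := by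
    intro c x hx
    exact (hTeq (hsmul c _ _ (hTmem hx))).symm
  have hTsym : ∀ {x y : X}, (A x).Nonempty → (A y).Nonempty → T x y = T y x := by
    intro x y hx hy
    exact hsym _ _ _ _ (hTmem hx) (hTmem hy)
  have hpos : ∀ {x : X}, (A x).Nonempty → 0 ≤ T x x := by
    intro x hx
    have := hmax.1 (hTmem hx) h0A
    simpa using this
  have lem1 : ∀ {x y : X}, (A x).Nonempty → (A y).Nonempty →
      2 * T y x ≤ T x x + T y y := by
    intro x y hx hy
    have h := hmax.1 (hTmem hx) (hTmem hy)
    simp only [ContinuousLinearMap.sub_apply, map_sub] at h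
    have hs := hTsym hx hy
    linarith
  constructor
  · -- forward direction
    intro heq x l hx hxl hconv
    obtain ⟨ρ, hρ⟩ := hconv
    have hle : phelpsF A l ≤ ((ρ / 2 : ℝ) : EReal) := by
      apply Stmt17Aux.phelps_le
      intro y y' hy'
      have hyV : (A y).Nonempty := ⟨y', hy'⟩
      have hn : ∀ n, y' (x n) - 1 / 2 * y' y ≤ 1 / 2 * ((hx n).choose (x n)) := by
        intro n
        have hch : (hx n).choose = T (x n) := Stmt17Aux.choose_eq_t hsingle (hx n)
        rw [hch]
        have h1 := lem1 (hx n) hyV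
        have h2 : y' = T y := hTeq hy'
        rw [h2]
        linarith
      have h1 : Tendsto (fun n => y' (x n) - 1 / 2 * y' y) atTop
          (𝓝 (y' l - 1 / 2 * y' y)) := by
        have h0 : Tendsto (fun n => y' (x n)) atTop (𝓝 (y' l)) :=
          (y'.continuous.tendsto l).comp hxl
        exact h0.sub_const _
      have h2 : Tendsto (fun n => 1 / 2 * ((hx n).choose (x n))) atTop (𝓝 (ρ / 2)) := by
        have h0 := hρ.const_mul (1 / 2 : ℝ)
        convert h0 using 2
        ring
      exact le_of_tendsto_of_tendsto' h1 h2 hn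
    have hne : phelpsF A l ≠ ⊤ := ne_top_of_le_ne_top (EReal.coe_ne_top _) hle
    have h2 : l ∈ ({x : X | phelpsF A x ≠ ⊤} : Set X) := hne
    rw [← heq] at h2
    exact h2
  · -- backward direction
    intro H
    ext x₀
    simp only [Set.mem_setOf_eq]
    constructor
    · intro hx₀
      have hle : phelpsF A x₀ ≤ ((1 / 2 * T x₀ x₀ : ℝ) : EReal) := by
        apply Stmt17Aux.phelps_le
        intro y y' hy'
        have hyV : (A y).Nonempty := ⟨y', hy'⟩
        have h1 := lem1 hx₀ hyV
        have h2 : y' = T y := hTeq hy'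
        rw [h2]
        linarith
      exact ne_top_of_le_ne_top (EReal.coe_ne_top _) hle
    · intro hftop
      by_contra hx₀
      -- the supremum s = f(x₀)
      set S : Set ℝ := {v : ℝ | ∃ (y : X) (y' : X →L[ℝ] ℝ), y' ∈ A y ∧
        v = y' x₀ - 1 / 2 * y' y} with hSdef
      have hS0 : (0 : ℝ) ∈ S := ⟨0, 0, h0A, by simp⟩
      have hSne : S.Nonempty := ⟨0, hS0⟩
      have hSbdd : BddAbove S := by
        by_contra hnb
        apply hftop
        apply Stmt17Aux.ereal_eq_top
        intro M
        obtain ⟨v, hvS, hv⟩ := not_bddAbove_iff.1 hnb M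
        obtain ⟨y, y', hy', rfl⟩ := hvS
        calc (M : EReal) ≤ ((y' x₀ - 1 / 2 * y' y : ℝ) : EReal) :=
              EReal.coe_le_coe_iff.2 (le_of_lt hv)
          _ ≤ phelpsF A x₀ := Stmt17Aux.le_phelps hy'
      set s : ℝ := sSup S with hsdef
      have hsub : ∀ (y : X) (y' : X →L[ℝ] ℝ), y' ∈ A y → y' x₀ - 1 / 2 * y' y ≤ s :=
        fun y y' hy' => le_csSup hSbdd ⟨y, y', hy', rfl⟩
      have hs0 : (0 : ℝ) ≤ s := le_csSup hSbdd hS0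
      have hsap : ∀ ε : ℝ, 0 < ε → ∃ (y : X) (y' : X →L[ℝ] ℝ), y' ∈ A y ∧
          s - ε < y' x₀ - 1 / 2 * y' y := by
        intro ε hε
        obtain ⟨v, hvS, hv⟩ := exists_lt_of_lt_csSup hSne (by linarith : s - ε < s)
        obtain ⟨y, y', hy', rfl⟩ := hvS
        exact ⟨y, y', hy', hv⟩
      -- the convex set K
      set K : Set (X × ℝ) := {p : X × ℝ | p.1 ∈ Vs ∧ 1 / 2 * T p.1 p.1 ≤ p.2} with hKdef
      have hKmem : ∀ y : X, y ∈ Vs → ((y, 1 / 2 * T y y) : X × ℝ) ∈ K :=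
        fun y hy => ⟨hy, le_rfl⟩
      have hKconv : Convex ℝ K := by
        rintro p ⟨hp1, hp2⟩ q ⟨hq1, hq2⟩ a b ha hb hab
        have hpV : (A p.1).Nonempty := (hmemV _).1 hp1
        have hqV : (A q.1).Nonempty := (hmemV _).1 hq1
        have hapV : (A (a • p.1)).Nonempty := (hmemV _).1 (Vs.smul_mem a hp1)
        have hbqV : (A (b • q.1)).Nonempty := (hmemV _).1 (Vs.smul_mem b hq1)
        have hsum : T (a • p.1 + b • q.1) = a • T p.1 + b • T q.1 := by
          rw [hTadd hapV hbqV, hTsmul a hpV, hTsmul b hqV]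
        have hsymm : T q.1 p.1 = T p.1 q.1 := hTsym hqV hpV
        have hexp : T ((a • p + b • q : X × ℝ).1) ((a • p + b • q : X × ℝ).1)
            = a * (a * T p.1 p.1) + a * (b * T p.1 q.1)
              + (b * (a * T p.1 q.1) + b * (b * T q.1 q.1)) := by
          show T (a • p.1 + b • q.1) (a • p.1 + b • q.1) = _
          rw [hsum]
          simp only [ContinuousLinearMap.add_apply, ContinuousLinearMap.smul_apply,
            map_add, map_smul, smul_eq_mul]
          rw [hsymm]
          ring
        have hquad : 0 ≤ T p.1 p.1 - 2 * T p.1 q.1 + T q.1 q.1 := by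
          have hd : (A (p.1 - q.1)).Nonempty := (hmemV _).1 (Vs.sub_mem hp1 hq1)
          have h1 := hpos hd
          have hmq : (A (-q.1)).Nonempty := (hmemV _).1 (Vs.neg_mem hq1)
          have e1 : T (-q.1) = -T q.1 := by
            have := hTsmul (-1) hqV; rw [neg_smul, one_smul] at this; rw [this]; ext z; simp
          have e : T (p.1 - q.1) = T p.1 - T q.1 := by
            rw [sub_eq_add_neg, hTadd hpV hmq, e1, ← sub_eq_add_neg]
          rw [e] at h1
          simp only [ContinuousLinearMap.sub_apply, map_sub] at h1
          have := hTsym hpV hqV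
          linarith
        show (a • p + b • q : X × ℝ).1 ∈ Vs ∧
          1 / 2 * T ((a • p + b • q : X × ℝ).1) ((a • p + b • q : X × ℝ).1)
            ≤ (a • p + b • q : X × ℝ).2
        refine ⟨Vs.add_mem (Vs.smul_mem a hp1) (Vs.smul_mem b hq1), ?_⟩
        rw [hexp]
        show _ ≤ a * p.2 + b * q.2
        have e1 : a * (a * T p.1 p.1) = a * T p.1 p.1 - a * b * T p.1 p.1 := by
          linear_combination (a * T p.1 p.1) * hab
        have e2 : b * (b * T q.1 q.1) = b * T q.1 q.1 - a * b * T q.1 q.1 := by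
          linear_combination (b * T q.1 q.1) * hab
        rw [e1, e2]
        have key := mul_nonneg (mul_nonneg ha hb) hquad
        nlinarith [key, mul_le_mul_of_nonneg_left hp2 ha,
          mul_le_mul_of_nonneg_left hq2 hb]
      -- Claim: (x₀, s) lies in the closure of K
      have hclos : ((x₀, s) : X × ℝ) ∈ closure K := by
        by_contra hnot
        obtain ⟨g, u, hgx, hgK'⟩ :=
          geometric_hahn_banach_point_closed hKconv.closure isClosed_closure hnot
        have hgK : ∀ p ∈ K, u < g p := fun p hp => hgK' p (subset_closure hp)
        set β : ℝ := g ((0 : X), (1 : ℝ)) with hβdef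
        set L : X →L[ℝ] ℝ := g.comp (ContinuousLinearMap.inl ℝ X ℝ) with hLdef
        have hLapp : ∀ y : X, L y = g (y, (0 : ℝ)) := fun y => rfl
        have hdec : ∀ p : X × ℝ, g p = L p.1 + p.2 * β := by
          intro p
          have e1 : p = ((p.1, (0 : ℝ)) : X × ℝ) + ((0 : X), p.2) := by
            ext <;> simp
          have e2 : (((0 : X), p.2) : X × ℝ) = p.2 • (((0 : X), (1 : ℝ)) : X × ℝ) := by
            ext <;> simp
          calc g p = g ((p.1, (0 : ℝ)) + ((0 : X), p.2)) := by rw [← e1]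
            _ = g (p.1, (0 : ℝ)) + g ((0 : X), p.2) := map_add _ _ _
            _ = L p.1 + g (p.2 • (((0 : X), (1 : ℝ)) : X × ℝ)) := by rw [← e2, hLapp]
            _ = L p.1 + p.2 * β := by rw [map_smul, smul_eq_mul]
        have hβ : 0 ≤ β := by
          by_contra hβneg
          push_neg at hβneg
          set m : ℝ := max 0 ((u - 1) / β) with hm
          have hm0 : (0 : ℝ) ≤ m := le_max_left _ _
          have hmem : (((0 : X), m) : X × ℝ) ∈ K := by
            refine ⟨h0V, ?_⟩
            show 1 / 2 * T 0 0 ≤ m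
            rw [hT0]
            simpa using hm0
          have h1 := hgK _ hmem
          rw [hdec] at h1
          simp only [map_zero] at h1
          have h2 : (u - 1) / β ≤ m := le_max_right _ _
          have hβne : β ≠ 0 := ne_of_lt hβneg
          have h3 : m * β ≤ u - 1 := by
            have h4 := mul_le_mul_of_nonpos_right h2 (le_of_lt hβneg)
            rwa [div_mul_cancel₀ _ hβne] at h4
          linarith
        rcases eq_or_lt_of_le hβ with hβ0 | hβpos
        · -- case β = 0
          have hLV : ∀ y ∈ Vs, L y = 0 := by
            intro y hy
            by_contra hLy
            have hKy : ∀ a : ℝ, u < a * L y := by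
              intro a
              have hyV : (A y).Nonempty := (hmemV _).1 hy
              have hmem := hKmem _ (Vs.smul_mem a hy)
              have h1 := hgK _ hmem
              rw [hdec] at h1
              rw [← hβ0] at h1
              simp only [mul_zero, add_zero] at h1
              have e : L (a • y) = a * L y := by rw [map_smul, smul_eq_mul]
              rwa [e] at h1
            have h5 := hKy ((u - 1) / L y)
            rw [div_mul_cancel₀ _ hLy] at h5
            linarith
          have hrel : ∀ (y : X) (y' : X →L[ℝ] ℝ), y' ∈ A y →
              0 ≤ ((-L) - y') ((0 : X) - y) := by
            intro y y' hy'
            have hyV : (A y).Nonempty := ⟨y', hy'⟩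
            have hyVs : y ∈ Vs := (hmemV y).2 hyV
            have h1 : y' = T y := hTeq hy'
            have h2 := hpos hyV
            have h3 := hLV y hyVs
            simp only [ContinuousLinearMap.sub_apply, ContinuousLinearMap.neg_apply,
              zero_sub, map_neg, h1]
            linarith
          have hmem0 : -L ∈ A 0 := Stmt17Aux.related_mem hmax hrel
          have hL0 : L = 0 := by
            have h1 : -L = T 0 := hTeq hmem0
            rw [hT0] at h1
            simpa [neg_eq_zero] using h1
          have h1 : (((0 : X), (0 : ℝ)) : X × ℝ) ∈ K := by
            refine ⟨h0V, ?_⟩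
            show 1 / 2 * T 0 0 ≤ (0 : ℝ)
            rw [hT0]; simp
          have h2 := hgK _ h1
          rw [hdec] at h2
          rw [hdec] at hgx
          rw [hL0] at h2 hgx
          rw [← hβ0] at h2 hgx
          simp at h2 hgx
          linarith
        · -- case β > 0
          have hβne : β ≠ 0 := ne_of_gt hβpos
          set xb : X →L[ℝ] ℝ := (-(β⁻¹)) • L with hxbdef
          have hxApp : ∀ y : X, xb y = -(β⁻¹) * L y := fun y => rfl
          have hA2' : ∀ y ∈ Vs, xb y - 1 / 2 * T y y ≤ -u / β := by
            intro y hy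
            have h1 := hgK _ (hKmem y hy)
            rw [hdec] at h1
            replace h1 : u < L y + 1 / 2 * T y y * β := h1
            have hinv : (0 : ℝ) < β⁻¹ := inv_pos.2 hβpos
            have key := mul_le_mul_of_nonneg_left (le_of_lt h1) (le_of_lt hinv)
            have e : β⁻¹ * (L y + 1 / 2 * T y y * β) = β⁻¹ * L y + 1 / 2 * T y y := by
              field_simp
            rw [e] at key
            have e2 : -u / β = -(β⁻¹ * u) := by rw [neg_div, div_eq_inv_mul]
            rw [hxApp]
            linarith [key, e2]
          set Sig2 : Set ℝ := {v : ℝ | ∃ y ∈ Vs, v = xb y - 1 / 2 * T y y} with hSigdef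
          have hSig0 : (0 : ℝ) ∈ Sig2 := ⟨0, h0V, by rw [hT0]; simp⟩
          have hSigne : Sig2.Nonempty := ⟨0, hSig0⟩
          have hSigbdd : BddAbove Sig2 := by
            refine ⟨-u / β, ?_⟩
            rintro v ⟨y, hy, rfl⟩
            exact hA2' y hy
          set σ : ℝ := sSup Sig2 with hσdef
          have hA2 : ∀ y ∈ Vs, xb y - 1 / 2 * T y y ≤ σ :=
            fun y hy => le_csSup hSigbdd ⟨y, hy, rfl⟩
          have hσle : σ ≤ -u / β := csSup_le hSigne (by rintro v ⟨y, hy, rfl⟩; exact hA2' y hy)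
          have hσap : ∀ ε : ℝ, 0 < ε → ∃ w ∈ Vs, σ - ε < xb w - 1 / 2 * T w w := by
            intro ε hε
            obtain ⟨v, hvS, hv⟩ := exists_lt_of_lt_csSup hSigne (by linarith : σ - ε < σ)
            obtain ⟨y, hy, rfl⟩ := hvS
            exact ⟨y, hy, hv⟩
          have hc : s + σ < xb x₀ := by
            rw [hdec] at hgx
            replace hgx : L x₀ + s * β < u := hgx
            -- L x₀ + s * β < u
            have hinv : (0 : ℝ) < β⁻¹ := inv_pos.2 hβpos
            have key := mul_le_mul_of_nonneg_left (le_of_lt hgx) (le_of_lt hinv)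
            have e : β⁻¹ * (L x₀ + s * β) = β⁻¹ * L x₀ + s := by field_simp
            rw [e] at key
            have e2 : -u / β = -(β⁻¹ * u) := by rw [neg_div, div_eq_inv_mul]
            have h3 : xb x₀ = -(β⁻¹) * L x₀ := hxApp x₀
            -- key : β⁻¹ * L x₀ + s ≤ β⁻¹ * u ; σ ≤ -(β⁻¹ u)
            rw [e2] at hσle
            -- want : s + σ < xb x₀.  We have strictness from hgx.
            have key2 := mul_lt_mul_of_pos_left hgx hinv
            rw [e] at key2
            rw [h3]
            linarith
          -- the star property from maximal monotonicity
          have hstar : ∀ z ∈ Vs, ∀ r : ℝ, ∃ y ∈ Vs,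
              r * xb x₀ + T z x₀ < T y x₀ + r * xb y + T y z - T y y := by
            intro z hz r
            by_contra hcon
            push_neg at hcon
            have hzV : (A z).Nonempty := (hmemV z).1 hz
            have hrel : ∀ (y : X) (y' : X →L[ℝ] ℝ), y' ∈ A y →
                0 ≤ ((r • xb + T z) - y') (x₀ - y) := by
              intro y y' hy'
              have hyV : (A y).Nonempty := ⟨y', hy'⟩
              have hyVs : y ∈ Vs := (hmemV y).2 hyV
              have h1 := hcon y hyVs
              have h2 : y' = T y := hTeq hy'
              have h3 : T z y = T y z := hTsym hzV hyV
              rw [h2]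
              simp only [ContinuousLinearMap.sub_apply, ContinuousLinearMap.add_apply,
                ContinuousLinearMap.smul_apply, map_sub, smul_eq_mul]
              linarith
            have hmem2 : (r • xb + T z) ∈ A x₀ := Stmt17Aux.related_mem hmax hrel
            exact hx₀ ⟨_, hmem2⟩
          -- feed everything to the arithmetic core
          refine Stmt17Aux.core Vs (fun y => T y x₀) (fun y z => T y z) (fun y => xb y)
            s σ (xb x₀) ?_ ?_ ?_ ?_ ?_ ?_ ?_ ?_ ?_ ?_ ?_ ?_ ?_ hc ?_
          · intro y hy z hz
            exact hTsym ((hmemV y).1 hy) ((hmemV z).1 hz)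
          · show T 0 x₀ = 0
            rw [hT0]; simp
          · exact map_zero xb
          · show T 0 0 = 0
            rw [hT0]; simp
          · intro y hy v hv
            show T (y + v) x₀ = T y x₀ + T v x₀
            rw [hTadd ((hmemV y).1 hy) ((hmemV v).1 hv)]
            simp [ContinuousLinearMap.add_apply]
          · intro a y hy
            show T (a • y) x₀ = a * T y x₀
            rw [hTsmul a ((hmemV y).1 hy)]
            simp [ContinuousLinearMap.smul_apply, smul_eq_mul]
          · intro y hy v hv
            exact map_add xb y v
          · intro a y hy
            show xb (a • y) = a * xb y
            rw [map_smul, smul_eq_mul]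
          · intro y hy v hv z hz
            show T (y + v) z = T y z + T v z
            rw [hTadd ((hmemV y).1 hy) ((hmemV v).1 hv)]
            simp [ContinuousLinearMap.add_apply]
          · intro a y hy z hz
            show T (a • y) z = a * T y z
            rw [hTsmul a ((hmemV y).1 hy)]
            simp [ContinuousLinearMap.smul_apply, smul_eq_mul]
          · intro y hy
            show T y x₀ - T y y / 2 ≤ s
            have := hsub y (T y) (hTmem ((hmemV y).1 hy))
            linarith
          · intro y hy
            show xb y - T y y / 2 ≤ σ
            have := hA2 y hy
            linarith
          · intro ε hε
            obtain ⟨w, hw, hwv⟩ := hσap ε hε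
            refine ⟨w, hw, ?_⟩
            show σ - ε < xb w - T w w / 2
            linarith
          · intro z hz r
            obtain ⟨y, hy, hval⟩ := hstar z hz r
            refine ⟨y, hy, ?_⟩
            show r * xb x₀ + T z x₀ < T y x₀ + r * xb y + T y z - T y y
            exact hval
      -- construct the sequence from closure membership
      have hseq : ∀ n : ℕ, ∃ p : X × ℝ, p ∈ K ∧
          dist ((x₀, s) : X × ℝ) p < 1 / ((n : ℝ) + 1) := by
        intro n
        exact Metric.mem_closure_iff.1 hclos (1 / ((n : ℝ) + 1)) (by positivity)
      choose p hpK hpd using hseq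
      set y : ℕ → X := fun n => (p n).1 with hy
      have hyV : ∀ n, (A (y n)).Nonempty := fun n => (hmemV _).1 (hpK n).1
      have hdist1 : ∀ n, dist (y n) x₀ ≤ 1 / ((n : ℝ) + 1) := by
        intro n
        have h1 : dist (x₀ : X) (y n) ≤ dist ((x₀, s) : X × ℝ) (p n) := by
          rw [Prod.dist_eq]
          exact le_max_left _ _
        rw [dist_comm]
        exact h1.trans (hpd n).le
      have htend : Tendsto y atTop (𝓝 x₀) := by
        apply tendsto_iff_dist_tendsto_zero.2
        exact squeeze_zero (fun n => dist_nonneg) hdist1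
          tendsto_one_div_add_atTop_nhds_zero_nat
      have hup : ∀ n, T (y n) (y n) ≤ 2 * s + 2 / ((n : ℝ) + 1) := by
        intro n
        have h1 : 1 / 2 * T (y n) (y n) ≤ (p n).2 := (hpK n).2
        have h2 : dist s ((p n).2) ≤ dist ((x₀, s) : X × ℝ) (p n) := by
          rw [Prod.dist_eq]
          exact le_max_right _ _
        have h3 := h2.trans (hpd n).le
        rw [Real.dist_eq] at h3
        have h4 := abs_le.1 h3
        have e : (2:ℝ) / ((n : ℝ) + 1) = 2 * (1 / ((n : ℝ) + 1)) := by ring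
        rw [e]
        linarith [h4.1]
      have hconv2 : Tendsto (fun n => (hyV n).choose (y n)) atTop (𝓝 (2 * s)) := by
        have hch : ∀ n, (hyV n).choose = T (y n) :=
          fun n => Stmt17Aux.choose_eq_t hsingle (hyV n)
        rw [Metric.tendsto_atTop]
        intro ε hε
        have e1 : ∀ᶠ n : ℕ in atTop, 2 / ((n : ℝ) + 1) < ε := by
          have h2 : Tendsto (fun n : ℕ => 2 / ((n : ℝ) + 1)) atTop (𝓝 0) := by
            have h0 := tendsto_one_div_add_atTop_nhds_zero_nat.const_mul (2 : ℝ)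
            simp only [mul_zero] at h0
            convert h0 using 2 with n
            ring
          exact h2.eventually_lt_const hε
        obtain ⟨w, w', hw', hwv⟩ := hsap (ε / 4) (by positivity)
        have hwV : (A w).Nonempty := ⟨w', hw'⟩
        have hw'T : w' = T w := hTeq hw'
        rw [hw'T] at hwv
        have htw : Tendsto (fun n => T w (y n)) atTop (𝓝 (T w x₀)) :=
          ((T w).continuous.tendsto x₀).comp htend
        have e2 : ∀ᶠ n : ℕ in atTop, T w x₀ - ε / 4 < T w (y n) :=
          htw.eventually_const_lt (by linarith)
        obtain ⟨N, hN⟩ := Filter.eventually_atTop.1 (e1.and e2)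
        refine ⟨N, fun n hn => ?_⟩
        obtain ⟨hn1, hn2⟩ := hN n hn
        have hlow : 2 * s - ε < T (y n) (y n) := by
          have h1 := lem1 (hyV n) hwV
          linarith
        have hupn : T (y n) (y n) < 2 * s + ε := lt_of_le_of_lt (hup n) (by linarith)
        rw [hch n, Real.dist_eq, abs_lt]
        constructor <;> linarith
      exact hx₀ (H y x₀ hyV htend ⟨2 * s, hconv2⟩)
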